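/- arXiv:2206.13834 — 4 statements merged into one kernel-verified Lean document; each statement's English description precedes it below -/
import Mathlib

section
/- For any a ∈ ℝ and b > 0, the function a ↦ a·Φ(a/b) + (b/√(2π))·e^{-a²/(2b²)} is convex and 1-Lipschitz in a. -/
open MeasureTheory ProbabilityTheory Real Set

/-- The cumulative distribution function of a standard Gaussian random variable. -/
noncomputable def stdGaussianCDF (x : ℝ) : ℝ :=
  ((gaussianReal 0 1) (Set.Iic x)).toReal

lemma continuous_gaussianPDFReal01 : Continuous (gaussianPDFReal 0 1) := by
  unfold gaussianPDFReal
  fun_prop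

lemma stdGaussianCDF_eq (x : ℝ) :
    stdGaussianCDF x = ∫ t in Set.Iic x, gaussianPDFReal 0 1 t := by
  rw [stdGaussianCDF, gaussianReal_apply_eq_integral 0 one_ne_zero,
    ENNReal.toReal_ofReal]
  exact integral_nonneg fun t => gaussianPDFReal_nonneg 0 1 t

lemma hasDerivAt_stdGaussianCDF (x : ℝ) :
    HasDerivAt stdGaussianCDF (gaussianPDFReal 0 1 x) x := by
  have hint : ∀ y : ℝ, IntegrableOn (gaussianPDFReal 0 1) (Set.Iic y) :=
    fun y => (integrable_gaussianPDFReal 0 1).integrableOn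
  have hfun : ∀ y : ℝ, stdGaussianCDF y =
      (∫ t in Set.Iic (0:ℝ), gaussianPDFReal 0 1 t)
        + ∫ t in (0:ℝ)..y, gaussianPDFReal 0 1 t := by
    intro y
    rw [← intervalIntegral.integral_Iic_sub_Iic (hint 0) (hint y), stdGaussianCDF_eq]
    ring
  have h : HasDerivAt (fun y => (∫ t in Set.Iic (0:ℝ), gaussianPDFReal 0 1 t)
      + ∫ t in (0:ℝ)..y, gaussianPDFReal 0 1 t) (gaussianPDFReal 0 1 x) x := by
    refine (HasDerivAt.const_add _ ?_)
    refine intervalIntegral.integral_hasDerivAt_right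
      ((integrable_gaussianPDFReal 0 1).intervalIntegrable)
      (continuous_gaussianPDFReal01.stronglyMeasurable.stronglyMeasurableAtFilter)
      continuous_gaussianPDFReal01.continuousAt
  exact h.congr_of_eventuallyEq (Filter.Eventually.of_forall fun y => (hfun y))

/-- The function `a ↦ a Φ(a/b) + (b/√(2π)) exp(-a²/(2b²))` is convex and
    1-Lipschitz in `a`. -/
theorem gaussian_pos_part_convex_lipschitz (b : ℝ) (hb : 0 < b) :
    ConvexOn ℝ Set.univ (fun a : ℝ =>
        a * stdGaussianCDF (a / b)
          + (b / Real.sqrt (2 * π)) * Real.exp (-(a ^ 2) / (2 * b ^ 2)))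
    ∧ LipschitzWith 1 (fun a : ℝ =>
        a * stdGaussianCDF (a / b)
          + (b / Real.sqrt (2 * π)) * Real.exp (-(a ^ 2) / (2 * b ^ 2))) := by
  have hb0 : b ≠ 0 := hb.ne'
  set f : ℝ → ℝ := fun a : ℝ =>
      a * stdGaussianCDF (a / b)
        + (b / Real.sqrt (2 * π)) * Real.exp (-(a ^ 2) / (2 * b ^ 2)) with hf_def
  -- derivative of f is Φ(a/b)
  have hderiv : ∀ a : ℝ, HasDerivAt f (stdGaussianCDF (a / b)) a := by
    intro a
    have hcdf : HasDerivAt (fun a : ℝ => stdGaussianCDF (a / b))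
        (gaussianPDFReal 0 1 (a / b) * (1 / b)) a := by
      have := (hasDerivAt_stdGaussianCDF (a / b)).comp a
        ((hasDerivAt_id a).div_const b)
      simpa [Function.comp_def] using this
    have h1 : HasDerivAt (fun a : ℝ => a * stdGaussianCDF (a / b))
        (1 * stdGaussianCDF (a / b) + a * (gaussianPDFReal 0 1 (a / b) * (1 / b))) a :=
      (hasDerivAt_id a).mul hcdf
    have hexp : HasDerivAt (fun a : ℝ =>
        (b / Real.sqrt (2 * π)) * Real.exp (-(a ^ 2) / (2 * b ^ 2)))
        ((b / Real.sqrt (2 * π)) *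
          (Real.exp (-(a ^ 2) / (2 * b ^ 2)) * (-(2 * a ^ 1) / (2 * b ^ 2)))) a := by
      have hinner : HasDerivAt (fun a : ℝ => -(a ^ 2) / (2 * b ^ 2))
          (-(2 * a ^ 1) / (2 * b ^ 2)) a := ((hasDerivAt_pow 2 a).neg).div_const _
      exact (hinner.exp).const_mul _
    have h := h1.add hexp
    have heq : 1 * stdGaussianCDF (a / b) + a * (gaussianPDFReal 0 1 (a / b) * (1 / b))
        + (b / Real.sqrt (2 * π)) *
          (Real.exp (-(a ^ 2) / (2 * b ^ 2)) * (-(2 * a ^ 1) / (2 * b ^ 2)))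
        = stdGaussianCDF (a / b) := by
      have hpdf : gaussianPDFReal 0 1 (a / b)
          = (Real.sqrt (2 * π))⁻¹ * Real.exp (-(a ^ 2) / (2 * b ^ 2)) := by
        rw [gaussianPDFReal]
        push_cast
        rw [sub_zero, show -(a / b) ^ 2 / (2 * 1) = -(a ^ 2) / (2 * b ^ 2) from by
            rw [div_pow]; ring, show (2:ℝ) * π * 1 = 2 * π from by ring]
      rw [hpdf]
      have hsqrt : Real.sqrt (2 * π) ≠ 0 := by
        positivity
      field_simp
      ring
    rw [heq] at h
    exact h
  have hdiff : Differentiable ℝ f := fun a => (hderiv a).differentiableAt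
  have hderiv' : ∀ a : ℝ, deriv f a = stdGaussianCDF (a / b) := fun a => (hderiv a).deriv
  -- Φ monotone and in [0,1]
  have hmono : Monotone stdGaussianCDF := by
    intro x y hxy
    exact ENNReal.toReal_mono (measure_ne_top _ _) (measure_mono (Iic_subset_Iic.2 hxy))
  have hnonneg : ∀ x, 0 ≤ stdGaussianCDF x := fun x => ENNReal.toReal_nonneg
  have hle1 : ∀ x, stdGaussianCDF x ≤ 1 := by
    intro x
    rw [stdGaussianCDF]
    have h := prob_le_one (μ := gaussianReal 0 1) (s := Set.Iic x)
    have := ENNReal.toReal_mono ENNReal.one_ne_top h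
    simpa using this
  constructor
  · refine Monotone.convexOn_univ_of_deriv hdiff ?_
    intro x y hxy
    rw [hderiv' x, hderiv' y]
    exact hmono (by gcongr)
  · refine lipschitzWith_of_nnnorm_deriv_le hdiff ?_
    intro x
    rw [← NNReal.coe_le_coe]
    simp only [coe_nnnorm, Real.norm_eq_abs, hderiv' x, NNReal.coe_one]
    rw [abs_of_nonneg (hnonneg _)]
    exact hle1 _
end

section
/- For any fixed x ∈ ℝ and b > 0, lim_{N→∞} (1/N)·log( x·Φ(√N·x/b) + (b/√(2πN))·e^{-N x²/(2b²)} ) = -(min(x,0))²/(2b²). -/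
open MeasureTheory ProbabilityTheory Real Set Filter

noncomputable def phi (t : ℝ) : ℝ := (Real.sqrt (2 * π))⁻¹ * Real.exp (-t ^ 2 / 2)

lemma phi_pos (t : ℝ) : 0 < phi t := by
  have := Real.pi_pos
  unfold phi; positivity

lemma phi_le_phi {s t : ℝ} (h : s ^ 2 ≤ t ^ 2) : phi t ≤ phi s := by
  unfold phi
  gcongr


lemma gaussianPDFReal_zero_one (t : ℝ) : gaussianPDFReal 0 1 t = phi t := by
  simp [gaussianPDFReal, phi]

lemma integrable_phi : Integrable phi := by
  have := integrable_gaussianPDFReal 0 1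
  simpa [funext gaussianPDFReal_zero_one] using this

lemma integrable_mul_phi : Integrable (fun t => t * phi t) := by
  have h := (integrable_mul_exp_neg_mul_sq (b := 1/2) (by norm_num)).const_mul
    ((Real.sqrt (2 * π))⁻¹)
  refine h.congr (ae_of_all _ fun t => ?_)
  unfold phi; ring

lemma stdGaussianCDF_eq_s4 (y : ℝ) : stdGaussianCDF y = ∫ t in Iic y, phi t := by
  unfold stdGaussianCDF
  rw [gaussianReal_apply_eq_integral 0 one_ne_zero,
    ENNReal.toReal_ofReal (integral_nonneg fun t => gaussianPDFReal_nonneg 0 1 t)]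
  exact integral_congr_ae (ae_of_all _ fun t => gaussianPDFReal_zero_one t)

lemma stdGaussianCDF_nonneg (y : ℝ) : 0 ≤ stdGaussianCDF y := ENNReal.toReal_nonneg

lemma stdGaussianCDF_le_one (y : ℝ) : stdGaussianCDF y ≤ 1 := by
  unfold stdGaussianCDF
  exact ENNReal.toReal_le_of_le_ofReal zero_le_one (by simpa using prob_le_one)

lemma integral_Iic_neg_mul_phi (u : ℝ) : ∫ t in Iic u, -t * phi t = phi u := by
  have hderiv : ∀ t : ℝ, HasDerivAt phi (-t * phi t) t := by
    intro t
    have h1 : HasDerivAt (fun t : ℝ => -t ^ 2 / 2) (-t) t := by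
      have := ((hasDerivAt_pow 2 t).neg).div_const 2
      simpa using this.congr_deriv (by ring)
    have h2 := (h1.exp).const_mul ((Real.sqrt (2 * π))⁻¹)
    refine h2.congr_deriv ?_
    unfold phi; ring
  have htends : Tendsto phi atBot (nhds 0) := by
    have hsq : Tendsto (fun t : ℝ => t ^ 2) atBot atTop := by
      have := (tendsto_pow_atTop (α := ℝ) (n := 2) two_ne_zero).comp tendsto_neg_atBot_atTop
      refine this.congr fun t => ?_
      simp [Function.comp]
    have h1 : Tendsto (fun t : ℝ => -t ^ 2 / 2) atBot atBot :=
      (tendsto_neg_atTop_atBot.comp hsq).atBot_div_const (by norm_num)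
    have := (Real.tendsto_exp_atBot.comp h1).const_mul ((Real.sqrt (2 * π))⁻¹)
    rw [mul_zero] at this
    refine this.congr fun t => ?_
    simp [phi, Function.comp]
  have hint : IntegrableOn (fun t : ℝ => -t * phi t) (Iic u) := by
    exact (integrable_mul_phi.neg.congr (ae_of_all _ fun t => by simp [neg_mul])).integrableOn
  have := integral_Iic_of_hasDerivAt_of_tendsto
    (f := phi) (f' := fun t => -t * phi t) (a := u)
    (hderiv u).continuousAt.continuousWithinAt (fun t _ => hderiv t) hint htends
  simpa using this

lemma phi_neg (a : ℝ) : phi (-a) = phi a := by simp [phi]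

lemma integrable_lin_phi (a : ℝ) : Integrable (fun t : ℝ => (-t - a) * phi t) := by
  refine (integrable_mul_phi.neg.sub (integrable_phi.const_mul a)).congr (ae_of_all _ fun t => ?_)
  simp; ring

lemma cdf_lower {u : ℝ} (hu : 0 ≤ u) : phi 1 ≤ stdGaussianCDF u := by
  rw [stdGaussianCDF_eq_s4]
  have h0 : phi 1 = ∫ _t in Ioc (-1 : ℝ) 0, phi 1 := by
    rw [setIntegral_const, Real.volume_real_Ioc]
    norm_num
  rw [h0]
  refine le_trans (setIntegral_mono_on (integrableOn_const (by simp))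
    (integrable_phi.integrableOn) measurableSet_Ioc fun t ht => ?_)
    (setIntegral_mono_set integrable_phi.integrableOn
      (ae_of_all _ fun t => (phi_pos t).le)
      (HasSubset.Subset.eventuallyLE fun t ht => le_trans ht.2 hu))
  exact phi_le_phi (by nlinarith [ht.1, ht.2])

lemma g_upper {a : ℝ} (ha : 0 ≤ a) : phi a - a * stdGaussianCDF (-a) ≤ phi a := by
  nlinarith [stdGaussianCDF_nonneg (-a)]

lemma g_lower {a : ℝ} (ha : 0 ≤ a) : phi (a + 2) ≤ phi a - a * stdGaussianCDF (-a) := by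
  rw [stdGaussianCDF_eq_s4]
  have hint1 : IntegrableOn (fun t : ℝ => -t * phi t) (Iic (-a)) :=
    (integrable_mul_phi.neg.congr (ae_of_all _ fun t => by simp [neg_mul])).integrableOn
  have hint2 : IntegrableOn (fun t : ℝ => a * phi t) (Iic (-a)) :=
    (integrable_phi.const_mul a).integrableOn
  have h1 : ∫ t in Iic (-a), (-t - a) * phi t = phi a - a * ∫ t in Iic (-a), phi t := by
    have he : ∀ t : ℝ, (-t - a) * phi t = -t * phi t - a * phi t := fun t => by ring
    simp_rw [he]
    rw [integral_sub hint1 hint2, integral_Iic_neg_mul_phi (-a), phi_neg, integral_const_mul]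
  rw [← h1]
  have h0 : phi (a + 2) = ∫ _t in Ioc (-a - 2) (-a - 1), phi (a + 2) := by
    rw [setIntegral_const, Real.volume_real_Ioc]
    norm_num
  rw [h0]
  refine le_trans (setIntegral_mono_on (integrableOn_const (by simp))
    ((integrable_lin_phi a).integrableOn) measurableSet_Ioc fun t ht => ?_)
    (setIntegral_mono_set (integrable_lin_phi a).integrableOn
      ((ae_restrict_iff' measurableSet_Iic).2 (ae_of_all _ fun t hts => ?_))
      (HasSubset.Subset.eventuallyLE fun t ht => ?_))
  · have h2 : phi (a + 2) ≤ phi t := phi_le_phi (by nlinarith [ht.1, ht.2])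
    have h3 : (1 : ℝ) ≤ -t - a := by linarith [ht.2]
    nlinarith [phi_pos t, phi_pos (a + 2)]
  · have h4 : t ≤ -a := hts
    have := phi_pos t
    simp only [Pi.zero_apply]
    nlinarith
  · exact le_trans ht.2 (by linarith)

lemma aux_log_div : Tendsto (fun N : ℕ => Real.log N / N) atTop (nhds 0) :=
  (Real.isLittleO_log_id_atTop.tendsto_div_nhds_zero).comp tendsto_natCast_atTop_atTop

lemma aux_inv_sqrt : Tendsto (fun N : ℕ => 1 / Real.sqrt N) atTop (nhds 0) := by
  simp_rw [one_div]
  have hs : Tendsto Real.sqrt atTop atTop := by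
    refine tendsto_atTop_atTop.2 fun q => ⟨q ^ 2 ⊔ 0, fun a ha => ?_⟩
    have h1 : q ^ 2 ≤ a := le_trans le_sup_left ha
    have h2 : (0:ℝ) ≤ a := le_trans le_sup_right ha
    calc q ≤ |q| := le_abs_self q
    _ = Real.sqrt (q ^ 2) := (Real.sqrt_sq_eq_abs q).symm
    _ ≤ Real.sqrt a := Real.sqrt_le_sqrt h1
  exact Tendsto.inv_tendsto_atTop (hs.comp tendsto_natCast_atTop_atTop)

/-- For fixed `x ∈ ℝ` and `b > 0`,
    `lim_{N→∞} (1/N) log( x Φ(√N x/b) + (b/√(2πN)) exp(-N x²/(2b²)) )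
      = -(min(x,0))²/(2b²)`. -/
theorem gaussian_tail_log_limit (x b : ℝ) (hb : 0 < b) :
    Tendsto (fun N : ℕ => (1 / (N : ℝ)) * Real.log
        (x * stdGaussianCDF (Real.sqrt N * x / b)
          + (b / Real.sqrt (2 * π * N)) * Real.exp (-((N : ℝ) * x ^ 2) / (2 * b ^ 2))))
      atTop (nhds (-(min x 0) ^ 2 / (2 * b ^ 2))) := by
  have hpi := Real.pi_gt_three
  have h2pi : (0:ℝ) < 2 * π := by linarith
  have hs2pi : 0 < Real.sqrt (2 * π) := Real.sqrt_pos.2 h2pi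
  have t1 := tendsto_one_div_atTop_nhds_zero_nat (𝕜 := ℝ)
  rcases le_or_gt x 0 with hx | hx
  · -- case x ≤ 0
    set c : ℝ := -x with hcdef
    have hc : 0 ≤ c := by simp [hcdef]; linarith
    have hx2 : x ^ 2 = c ^ 2 := by rw [hcdef]; ring
    have hmin : min x 0 = x := min_eq_left hx
    rw [hmin]
    have htarget : -x ^ 2 / (2 * b ^ 2) = 0 - c ^ 2 / (2 * b ^ 2) := by rw [hx2]; ring
    rw [htarget]
    set UB : ℕ → ℝ := fun N => (1 / (N:ℝ)) * (Real.log b - Real.log (Real.sqrt N)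
      - Real.log (Real.sqrt (2 * π))) - c ^ 2 / (2 * b ^ 2) with hUB
    set LB : ℕ → ℝ := fun N => UB N - 2 * c / (b * Real.sqrt N) - 2 / (N:ℝ) with hLB
    have tlog : Tendsto (fun N : ℕ => (1/(N:ℝ)) * Real.log (Real.sqrt N)) atTop (nhds 0) := by
      have h2 : Tendsto (fun N : ℕ => (1/2:ℝ) * (Real.log N / N)) atTop (nhds ((1/2:ℝ) * 0)) :=
        aux_log_div.const_mul _
      rw [mul_zero] at h2
      exact h2.congr fun N => by rw [Real.log_sqrt (Nat.cast_nonneg N)]; ring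
    have hUBlim : Tendsto UB atTop (nhds (0 - c ^ 2 / (2 * b ^ 2))) := by
      have h := (((t1.mul_const (Real.log b)).sub tlog).sub
        (t1.mul_const (Real.log (Real.sqrt (2 * π))))).sub_const (c ^ 2 / (2 * b ^ 2))
      simp only [zero_mul, sub_zero, zero_sub] at h
      rw [show (0:ℝ) - c ^ 2 / (2 * b ^ 2) = -(c ^ 2 / (2 * b ^ 2)) from by ring]
      exact h.congr fun N => by simp only [hUB]; ring
    have hLBlim : Tendsto LB atTop (nhds (0 - c ^ 2 / (2 * b ^ 2))) := by
      have h := (hUBlim.sub (aux_inv_sqrt.const_mul (2 * c / b))).sub (t1.const_mul 2)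
      simp only [mul_zero, sub_zero] at h
      refine Tendsto.congr (fun N => ?_) h
      rw [hLB]
      dsimp only
      rw [div_mul_eq_div_div, div_eq_mul_one_div (2*c/b), ← mul_one_div (2:ℝ)]
    refine tendsto_of_tendsto_of_tendsto_of_le_of_le' hLBlim hUBlim ?_ ?_ <;>
      · filter_upwards [eventually_ge_atTop 1] with N hN
        have hN0 : (0:ℝ) < N := by exact_mod_cast hN
        have hsN : (0:ℝ) < Real.sqrt N := Real.sqrt_pos.2 hN0
        have hNs : ((N:ℝ)) = Real.sqrt N * Real.sqrt N := (Real.mul_self_sqrt hN0.le).symm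
        set a : ℝ := Real.sqrt N * c / b with hadef
        have ha : 0 ≤ a := by positivity
        have hxa : Real.sqrt N * x / b = -a := by rw [hadef, hcdef]; ring
        have ha2 : a ^ 2 = N * c ^ 2 / b ^ 2 := by
          rw [hadef, div_pow, mul_pow, Real.sq_sqrt hN0.le]
        have hexp : -((N:ℝ) * x ^ 2) / (2 * b ^ 2) = -a ^ 2 / 2 := by
          rw [ha2, hx2]; field_simp
        have hsplit : Real.sqrt (2 * π * N) = Real.sqrt (2 * π) * Real.sqrt N :=
          Real.sqrt_mul h2pi.le N
        set g : ℝ := phi a - a * stdGaussianCDF (-a) with hgdef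
        have hgpos : 0 < g := lt_of_lt_of_le (phi_pos (a+2)) (g_lower ha)
        have hxeq : x = -(b / Real.sqrt N * a) := by
          rw [hadef, hcdef]; field_simp
        have hf : x * stdGaussianCDF (Real.sqrt N * x / b)
            + (b / Real.sqrt (2 * π * N)) * Real.exp (-((N:ℝ) * x ^ 2) / (2 * b ^ 2))
            = (b / Real.sqrt N) * g := by
          rw [hxa, hexp, hsplit, hgdef]
          conv_lhs => rw [hxeq]
          unfold phi
          field_simp
          ring
        rw [hf]
        have hlogf : Real.log ((b / Real.sqrt N) * g)
            = Real.log b - Real.log (Real.sqrt N) + Real.log g := by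
          rw [Real.log_mul (by positivity) hgpos.ne', Real.log_div hb.ne' hsN.ne']
        have hlogphi : ∀ u : ℝ, Real.log (phi u) = -Real.log (Real.sqrt (2*π)) - u ^ 2 / 2 := by
          intro u
          unfold phi
          rw [Real.log_mul (by positivity) (Real.exp_pos _).ne', Real.log_inv, Real.log_exp]
          ring
        have hNinv : (1:ℝ)/(N:ℝ) = 1/(Real.sqrt N * Real.sqrt N) := by
          rw [Real.mul_self_sqrt hN0.le]
        have hkeyA : (1/(N:ℝ)) * (a ^ 2 / 2) = c ^ 2 / (2 * b ^ 2) := by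
          rw [hadef, hNinv]; field_simp
        have hkeyB : (1/(N:ℝ)) * (2 * a) = 2 * c / (b * Real.sqrt N) := by
          rw [hadef, hNinv]; field_simp
        have keyU : UB N = (1/(N:ℝ)) * (Real.log b - Real.log (Real.sqrt N)
            + (-Real.log (Real.sqrt (2*π)) - a ^ 2 / 2)) := by
          simp only [hUB]
          rw [← hkeyA]; ring
        first
        | -- lower bound : LB N ≤ (1/N) * log f
          ( have hlg : -Real.log (Real.sqrt (2*π)) - (a+2) ^ 2 / 2 ≤ Real.log g := by
              rw [← hlogphi (a+2)]
              exact Real.log_le_log (phi_pos (a+2)) (g_lower ha)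
            have key : LB N = (1/(N:ℝ)) * (Real.log b - Real.log (Real.sqrt N)
                + (-Real.log (Real.sqrt (2*π)) - (a+2) ^ 2 / 2)) := by
              simp only [hLB]
              rw [keyU, ← hkeyB,
                show (2:ℝ)/(N:ℝ) = (1/(N:ℝ)) * 2 from by ring]
              ring
            rw [key]
            apply mul_le_mul_of_nonneg_left _ (by positivity)
            rw [hlogf]
            linarith )
        | -- upper bound : (1/N) * log f ≤ UB N
          ( have hlg : Real.log g ≤ -Real.log (Real.sqrt (2*π)) - a ^ 2 / 2 := by
              rw [← hlogphi a]
              exact Real.log_le_log hgpos (g_upper ha)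
            rw [keyU]
            apply mul_le_mul_of_nonneg_left _ (by positivity)
            rw [hlogf]
            linarith )
  · -- case x > 0
    have hmin : min x 0 = 0 := min_eq_right hx.le
    rw [hmin]
    have h0 : -(0:ℝ) ^ 2 / (2 * b ^ 2) = 0 := by norm_num
    rw [h0]
    have hxphi : 0 < x * phi 1 := mul_pos hx (phi_pos 1)
    have hL : Tendsto (fun N : ℕ => (1/(N:ℝ)) * Real.log (x * phi 1)) atTop (nhds 0) := by
      have := t1.mul_const (Real.log (x * phi 1))
      simpa using this
    have hU : Tendsto (fun N : ℕ => (1/(N:ℝ)) * Real.log (x + b)) atTop (nhds 0) := by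
      have := t1.mul_const (Real.log (x + b))
      simpa using this
    refine tendsto_of_tendsto_of_tendsto_of_le_of_le' hL hU ?_ ?_ <;>
      · filter_upwards [eventually_ge_atTop 1] with N hN
        have hN0 : (0:ℝ) < N := by exact_mod_cast hN
        have hN1 : (1:ℝ) ≤ N := by exact_mod_cast hN
        have harg : 0 ≤ Real.sqrt N * x / b := by positivity
        have hcdf1 : stdGaussianCDF (Real.sqrt N * x / b) ≤ 1 := stdGaussianCDF_le_one _
        have hcdf0 : phi 1 ≤ stdGaussianCDF (Real.sqrt N * x / b) := cdf_lower harg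
        have hflow : x * phi 1 ≤ x * stdGaussianCDF (Real.sqrt N * x / b)
            + (b / Real.sqrt (2 * π * N)) * Real.exp (-((N:ℝ) * x ^ 2) / (2 * b ^ 2)) := by
          have h1 : x * phi 1 ≤ x * stdGaussianCDF (Real.sqrt N * x / b) :=
            mul_le_mul_of_nonneg_left hcdf0 hx.le
          have h2 : 0 ≤ (b / Real.sqrt (2 * π * N)) * Real.exp (-((N:ℝ) * x ^ 2) / (2 * b ^ 2)) := by
            positivity
          linarith
        have hfup : x * stdGaussianCDF (Real.sqrt N * x / b)
            + (b / Real.sqrt (2 * π * N)) * Real.exp (-((N:ℝ) * x ^ 2) / (2 * b ^ 2))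
            ≤ x + b := by
          have h1 : x * stdGaussianCDF (Real.sqrt N * x / b) ≤ x * 1 :=
            mul_le_mul_of_nonneg_left hcdf1 hx.le
          have hsq1 : (1:ℝ) ≤ Real.sqrt (2 * π * N) := by
            rw [show (1:ℝ) = Real.sqrt 1 by simp]
            apply Real.sqrt_le_sqrt
            nlinarith
          have hexp1 : Real.exp (-((N:ℝ) * x ^ 2) / (2 * b ^ 2)) ≤ 1 := by
            rw [Real.exp_le_one_iff]
            have : 0 ≤ (N:ℝ) * x ^ 2 := by positivity
            have hb2 : 0 < 2 * b ^ 2 := by positivity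
            exact div_nonpos_iff.2 (Or.inr ⟨by linarith, hb2.le⟩)
          have h2 : (b / Real.sqrt (2 * π * N)) * Real.exp (-((N:ℝ) * x ^ 2) / (2 * b ^ 2))
              ≤ b := by
            calc (b / Real.sqrt (2 * π * N)) * Real.exp (-((N:ℝ) * x ^ 2) / (2 * b ^ 2))
                ≤ (b / Real.sqrt (2 * π * N)) * 1 := by
                  apply mul_le_mul_of_nonneg_left hexp1 (by positivity)
              _ = b / Real.sqrt (2 * π * N) := mul_one _
              _ ≤ b / 1 := by
                  apply div_le_div_of_nonneg_left hb.le (by norm_num) hsq1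
              _ = b := div_one b
          linarith
        first
        | ( apply mul_le_mul_of_nonneg_left _ (by positivity)
            exact Real.log_le_log hxphi hflow )
        | ( apply mul_le_mul_of_nonneg_left _ (by positivity)
            exact Real.log_le_log (lt_of_lt_of_le hxphi hflow) hfup )
end

section
/- Let S be a symmetric invertible real matrix written in block form S = [[A, B],[Bᵀ, C]] with A and C square and symmetric, and write S^{-1} = [[A', B'],[(B')ᵀ, C']] with the same block structure. If A and C' are invertible, then sgn(S) = sgn(A) + sgn(C'), where sgn(M) denotes the signature of a symmetric matrix M (number of positive eigenvalues minus number of negative eigenvalues). -/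
open Matrix

/-- The signature of a real symmetric matrix: the number of positive eigenvalues
    minus the number of negative eigenvalues (counted with multiplicity). -/
noncomputable def matSignature {n : Type*} [Fintype n] [DecidableEq n]
    {M : Matrix n n ℝ} (hM : M.IsHermitian) : ℤ :=
  ((Finset.univ.filter fun i => 0 < hM.eigenvalues i).card : ℤ)
    - ((Finset.univ.filter fun i => hM.eigenvalues i < 0).card : ℤ)

set_option maxHeartbeats 1000000

section LazutkinAux

open Matrix Finset Module Submodule

variable {n : Type*} [Fintype n] [DecidableEq n]

lemma lz_dot_sum {ι : Type*} (u : n → ℝ) (s : Finset ι) (f : ι → n → ℝ) :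
    u ⬝ᵥ (∑ i ∈ s, f i) = ∑ i ∈ s, u ⬝ᵥ f i := by
  simp only [dotProduct, Finset.sum_apply, Finset.mul_sum]
  exact Finset.sum_comm

lemma lz_sum_dot {ι : Type*} (u : n → ℝ) (s : Finset ι) (f : ι → n → ℝ) :
    (∑ i ∈ s, f i) ⬝ᵥ u = ∑ i ∈ s, f i ⬝ᵥ u := by
  simp only [dotProduct, Finset.sum_apply, Finset.sum_mul]
  exact Finset.sum_comm

/-- dot-orthonormal families are linearly independent -/
lemma lz_indep {ι : Type*} [Fintype ι] [DecidableEq ι] (v : ι → (n → ℝ))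
    (horm : ∀ i j, v i ⬝ᵥ v j = if i = j then (1:ℝ) else 0) :
    LinearIndependent ℝ v := by
  rw [Fintype.linearIndependent_iff]
  intro c hc j
  have h := congrArg (fun x => v j ⬝ᵥ x) hc
  simp only [lz_dot_sum, dotProduct_smul, horm, smul_eq_mul, mul_ite, mul_one, mul_zero,
    dotProduct_zero, Finset.sum_ite_eq, Finset.mem_univ, if_true] at h
  exact h

lemma lz_qf_eq {ι : Type*} [Fintype ι] [DecidableEq ι] (M : Matrix n n ℝ) (v : ι → (n → ℝ))
    (μ : ι → ℝ)
    (horm : ∀ i j, v i ⬝ᵥ v j = if i = j then (1:ℝ) else 0)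
    (heig : ∀ i, M *ᵥ v i = μ i • v i) (c : ι → ℝ) :
    (∑ i, c i • v i) ⬝ᵥ M *ᵥ (∑ i, c i • v i) = ∑ i, μ i * (c i)^2 := by
  have hmv : M *ᵥ (∑ i, c i • v i) = ∑ i, (μ i * c i) • v i := by
    have h := map_sum (M.mulVecLin) (fun i => c i • v i) Finset.univ
    simp only [mulVecLin_apply, _root_.map_smul] at h
    rw [h]
    refine Finset.sum_congr rfl fun i _ => ?_
    rw [heig, smul_smul, mul_comm]
  rw [hmv, lz_sum_dot]
  refine Finset.sum_congr rfl fun i _ => ?_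
  rw [lz_dot_sum]
  simp only [smul_dotProduct, dotProduct_smul, horm, smul_eq_mul, mul_ite, mul_one, mul_zero,
    Finset.sum_ite_eq, Finset.sum_ite_eq', Finset.mem_univ, if_true]
  ring

lemma lz_qf_pos {ι : Type*} [Fintype ι] [DecidableEq ι] (M : Matrix n n ℝ) (v : ι → (n → ℝ))
    (μ : ι → ℝ)
    (horm : ∀ i j, v i ⬝ᵥ v j = if i = j then (1:ℝ) else 0)
    (heig : ∀ i, M *ᵥ v i = μ i • v i) (hpos : ∀ i, 0 < μ i) :
    ∀ x ∈ span ℝ (Set.range v), x ≠ 0 → 0 < x ⬝ᵥ M *ᵥ x := by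
  intro x hx hx0
  obtain ⟨c, rfl⟩ := mem_span_range_iff_exists_fun ℝ |>.mp hx
  rw [lz_qf_eq M v μ horm heig c]
  have hne : ∃ i, c i ≠ 0 := by
    by_contra h
    push_neg at h
    exact hx0 (by simp [h])
  obtain ⟨i, hi⟩ := hne
  apply Finset.sum_pos' (fun j _ => mul_nonneg (hpos j).le (sq_nonneg _))
  exact ⟨i, Finset.mem_univ i, mul_pos (hpos i) (by positivity)⟩

lemma lz_qf_nonpos {ι : Type*} [Fintype ι] [DecidableEq ι] (M : Matrix n n ℝ) (v : ι → (n → ℝ))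
    (μ : ι → ℝ)
    (horm : ∀ i j, v i ⬝ᵥ v j = if i = j then (1:ℝ) else 0)
    (heig : ∀ i, M *ᵥ v i = μ i • v i) (hneg : ∀ i, μ i ≤ 0) :
    ∀ x ∈ span ℝ (Set.range v), x ⬝ᵥ M *ᵥ x ≤ 0 := by
  intro x hx
  obtain ⟨c, rfl⟩ := mem_span_range_iff_exists_fun ℝ |>.mp hx
  rw [lz_qf_eq M v μ horm heig c]
  apply Finset.sum_nonpos
  intro i _
  exact mul_nonpos_of_nonpos_of_nonneg (hneg i) (sq_nonneg _)

lemma lz_finrank_span {ι : Type*} [Fintype ι] [DecidableEq ι] (v : ι → (n → ℝ))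
    (horm : ∀ i j, v i ⬝ᵥ v j = if i = j then (1:ℝ) else 0) :
    Module.finrank ℝ (span ℝ (Set.range v)) = Fintype.card ι :=
  finrank_span_eq_card (lz_indep v horm)

lemma lz_dim_le (M : Matrix n n ℝ) (U V : Submodule ℝ (n → ℝ))
    (hU : ∀ x ∈ U, x ≠ 0 → 0 < x ⬝ᵥ M *ᵥ x) (hV : ∀ x ∈ V, x ⬝ᵥ M *ᵥ x ≤ 0) :
    Module.finrank ℝ U + Module.finrank ℝ V ≤ Fintype.card n := by
  have hUV : U ⊓ V = ⊥ := by
    rw [Submodule.eq_bot_iff]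
    intro x hx
    by_contra h
    exact absurd (hV x hx.2) (not_le.mpr (hU x hx.1 h))
  calc Module.finrank ℝ U + Module.finrank ℝ V
      = Module.finrank ℝ ↥(U ⊔ V) + Module.finrank ℝ ↥(U ⊓ V) :=
        (Submodule.finrank_sup_add_finrank_inf_eq U V).symm
    _ = Module.finrank ℝ ↥(U ⊔ V) := by rw [hUV]; simp
    _ ≤ Module.finrank ℝ (n → ℝ) := Submodule.finrank_le _
    _ = Fintype.card n := Module.finrank_fintype_fun_eq_card ℝ

lemma lz_eigen_dot {M : Matrix n n ℝ} (hM : M.IsHermitian) (i j : n) :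
    ⇑(hM.eigenvectorBasis i) ⬝ᵥ ⇑(hM.eigenvectorBasis j) = if i = j then (1:ℝ) else 0 := by
  have h := hM.eigenvectorBasis.orthonormal
  rw [orthonormal_iff_ite] at h
  have := h i j
  simpa [PiLp.inner_apply, RCLike.inner_apply, dotProduct, starRingEnd_apply, mul_comm] using this

lemma lz_pcard_eq {M : Matrix n n ℝ} (hM : M.IsHermitian) (Wp Wm : Submodule ℝ (n → ℝ))
    (hp : ∀ x ∈ Wp, x ≠ 0 → 0 < x ⬝ᵥ M *ᵥ x) (hm : ∀ x ∈ Wm, x ⬝ᵥ M *ᵥ x ≤ 0)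
    (hd : Module.finrank ℝ Wp + Module.finrank ℝ Wm = Fintype.card n) :
    ((Finset.univ.filter fun i => 0 < hM.eigenvalues i).card : ℕ) = Module.finrank ℝ Wp := by
  classical
  set q : n → Prop := fun i => 0 < hM.eigenvalues i with hq
  let vP : {i // q i} → (n → ℝ) := fun i => ⇑(hM.eigenvectorBasis i.val)
  let vN : {i // ¬ q i} → (n → ℝ) := fun i => ⇑(hM.eigenvectorBasis i.val)
  have hormP : ∀ i j, vP i ⬝ᵥ vP j = if i = j then (1:ℝ) else 0 := by
    intro i j
    rw [lz_eigen_dot hM]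
    simp [Subtype.ext_iff]
  have hormN : ∀ i j, vN i ⬝ᵥ vN j = if i = j then (1:ℝ) else 0 := by
    intro i j
    rw [lz_eigen_dot hM]
    simp [Subtype.ext_iff]
  have heigP : ∀ i, M *ᵥ vP i = hM.eigenvalues i.val • vP i := fun i =>
    hM.mulVec_eigenvectorBasis i.val
  have heigN : ∀ i, M *ᵥ vN i = hM.eigenvalues i.val • vN i := fun i =>
    hM.mulVec_eigenvectorBasis i.val
  have hrankP : Module.finrank ℝ (span ℝ (Set.range vP))
      = (Finset.univ.filter fun i => q i).card := by
    rw [lz_finrank_span vP hormP, Fintype.card_subtype]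
  have hrankN : Module.finrank ℝ (span ℝ (Set.range vN))
      = (Finset.univ.filter fun i => ¬ q i).card := by
    rw [lz_finrank_span vN hormN, Fintype.card_subtype]
  have hcards : (Finset.univ.filter fun i => q i).card
      + (Finset.univ.filter fun i => ¬ q i).card = Fintype.card n := by
    rw [Finset.card_filter_add_card_filter_not]
    rfl
  have h1 := lz_dim_le M Wp (span ℝ (Set.range vN)) hp
    (lz_qf_nonpos M vN (fun i => hM.eigenvalues i.val) hormN heigN
      (fun i => le_of_not_gt i.prop))
  have h2 := lz_dim_le M (span ℝ (Set.range vP)) Wm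
    (lz_qf_pos M vP (fun i => hM.eigenvalues i.val) hormP heigP (fun i => i.prop)) hm
  rw [hrankN] at h1
  rw [hrankP] at h2
  have hgoal : (Finset.univ.filter fun i => 0 < hM.eigenvalues i).card
      = (Finset.univ.filter fun i => q i).card := by
    apply Finset.card_bij (fun a _ => a) <;> simp [hq]
  omega

lemma lz_mulVec_sum {ι : Type*} [Fintype ι] (P : Matrix n n ℝ) (f : ι → n → ℝ) (c : ι → ℝ) :
    P *ᵥ (∑ i, c i • f i) = ∑ i, c i • (P *ᵥ f i) := by
  have h := map_sum (P.mulVecLin) (fun i => c i • f i) Finset.univ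
  simpa only [mulVecLin_apply, _root_.map_smul] using h

lemma lz_congr_qf (M P : Matrix n n ℝ) (y : n → ℝ) :
    (P *ᵥ y) ⬝ᵥ M *ᵥ (P *ᵥ y) = y ⬝ᵥ (Pᵀ * M * P) *ᵥ y := by
  rw [mulVec_mulVec, mul_assoc, ← mulVec_mulVec y Pᵀ (M * P), dotProduct_mulVec y,
    vecMul_transpose]

lemma lz_pcard_congr (M P : Matrix n n ℝ) (hM : M.IsHermitian) (hP : IsUnit P.det)
    (hN : (Pᵀ * M * P).IsHermitian) :
    ((Finset.univ.filter fun i => 0 < hM.eigenvalues i).card : ℕ)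
      = (Finset.univ.filter fun i => 0 < hN.eigenvalues i).card := by
  have hPinj : Function.Injective (P.mulVec) :=
    mulVec_injective_iff_isUnit.mpr ((isUnit_iff_isUnit_det P).mpr hP)
  set q : n → Prop := fun i => 0 < hN.eigenvalues i with hq
  let vP : {i // q i} → (n → ℝ) := fun i => P *ᵥ ⇑(hN.eigenvectorBasis i.val)
  let vN : {i // ¬ q i} → (n → ℝ) := fun i => P *ᵥ ⇑(hN.eigenvectorBasis i.val)
  -- independence and rank
  have hker : LinearMap.ker (P.mulVecLin) = ⊥ := LinearMap.ker_eq_bot.mpr hPinj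
  have hindepP : LinearIndependent ℝ vP := by
    have h0 : LinearIndependent ℝ (fun i : {i // q i} => ⇑(hN.eigenvectorBasis i.val)) :=
      lz_indep _ (fun i j => by rw [lz_eigen_dot hN]; simp [Subtype.ext_iff])
    exact h0.map' _ hker
  have hindepN : LinearIndependent ℝ vN := by
    have h0 : LinearIndependent ℝ (fun i : {i // ¬ q i} => ⇑(hN.eigenvectorBasis i.val)) :=
      lz_indep _ (fun i j => by rw [lz_eigen_dot hN]; simp [Subtype.ext_iff])
    exact h0.map' _ hker
  -- quadratic form properties
  have hmemP : ∀ x ∈ span ℝ (Set.range vP), x ≠ 0 → 0 < x ⬝ᵥ M *ᵥ x := by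
    intro x hx hx0
    obtain ⟨c, rfl⟩ := mem_span_range_iff_exists_fun ℝ |>.mp hx
    simp only [vP] at hx0 ⊢
    rw [← lz_mulVec_sum] at hx0 ⊢
    rw [lz_congr_qf]
    have hy0 : (∑ i : {i // q i}, c i • ⇑(hN.eigenvectorBasis i.val)) ≠ 0 := by
      intro h; apply hx0; rw [h, mulVec_zero]
    refine lz_qf_pos (Pᵀ * M * P) (fun i : {i // q i} => ⇑(hN.eigenvectorBasis i.val))
      (fun i => hN.eigenvalues i.val)
      (fun i j => by rw [lz_eigen_dot hN]; simp [Subtype.ext_iff])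
      (fun i => hN.mulVec_eigenvectorBasis i.val) (fun i => i.prop) _ ?_ hy0
    exact Submodule.sum_smul_mem _ _ (fun i _ => Submodule.subset_span ⟨i, rfl⟩)
  have hmemN : ∀ x ∈ span ℝ (Set.range vN), x ⬝ᵥ M *ᵥ x ≤ 0 := by
    intro x hx
    obtain ⟨c, rfl⟩ := mem_span_range_iff_exists_fun ℝ |>.mp hx
    simp only [vN] at *
    rw [← lz_mulVec_sum, lz_congr_qf]
    refine lz_qf_nonpos (Pᵀ * M * P) (fun i : {i // ¬ q i} => ⇑(hN.eigenvectorBasis i.val))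
      (fun i => hN.eigenvalues i.val)
      (fun i j => by rw [lz_eigen_dot hN]; simp [Subtype.ext_iff])
      (fun i => hN.mulVec_eigenvectorBasis i.val) (fun i => le_of_not_gt i.prop) _ ?_
    exact Submodule.sum_smul_mem _ _ (fun i _ => Submodule.subset_span ⟨i, rfl⟩)
  -- dimensions
  have hrankP : Module.finrank ℝ (span ℝ (Set.range vP))
      = (Finset.univ.filter fun i => q i).card := by
    rw [finrank_span_eq_card hindepP, Fintype.card_subtype]
  have hrankN : Module.finrank ℝ (span ℝ (Set.range vN))
      = (Finset.univ.filter fun i => ¬ q i).card := by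
    rw [finrank_span_eq_card hindepN, Fintype.card_subtype]
  have hcards : (Finset.univ.filter fun i => q i).card
      + (Finset.univ.filter fun i => ¬ q i).card = Fintype.card n := by
    rw [Finset.card_filter_add_card_filter_not]
    rfl
  have := lz_pcard_eq hM (span ℝ (Set.range vP)) (span ℝ (Set.range vN)) hmemP hmemN
    (by rw [hrankP, hrankN]; exact hcards)
  rw [this, hrankP]

section Block

variable {m : Type*} [Fintype m] [DecidableEq m]

lemma lz_elim_smul (a : ℝ) (u : m → ℝ) (v : n → ℝ) :
    a • (Sum.elim u v) = Sum.elim (a • u) (a • v) := by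
  funext x
  rcases x with x | x <;> simp

lemma lz_pcard_blockdiag (M1 : Matrix m m ℝ) (M2 : Matrix n n ℝ)
    (h1 : M1.IsHermitian) (h2 : M2.IsHermitian)
    (hB : (fromBlocks M1 0 0 M2).IsHermitian) :
    ((Finset.univ.filter fun i => 0 < hB.eigenvalues i).card : ℕ)
      = (Finset.univ.filter fun i => 0 < h1.eigenvalues i).card
        + (Finset.univ.filter fun i => 0 < h2.eigenvalues i).card := by
  set B := fromBlocks M1 0 0 M2 with hBdef
  -- positive family
  let wp : {i // 0 < h1.eigenvalues i} ⊕ {j // 0 < h2.eigenvalues j} → (m ⊕ n → ℝ) :=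
    Sum.elim (fun i => Sum.elim ⇑(h1.eigenvectorBasis i.val) 0)
      (fun j => Sum.elim 0 ⇑(h2.eigenvectorBasis j.val))
  let wm : {i // ¬ 0 < h1.eigenvalues i} ⊕ {j // ¬ 0 < h2.eigenvalues j} → (m ⊕ n → ℝ) :=
    Sum.elim (fun i => Sum.elim ⇑(h1.eigenvectorBasis i.val) 0)
      (fun j => Sum.elim 0 ⇑(h2.eigenvectorBasis j.val))
  have horm : ∀ (u₁ : m → ℝ) (u₂ : n → ℝ) (v₁ : m → ℝ) (v₂ : n → ℝ),
      Sum.elim u₁ u₂ ⬝ᵥ Sum.elim v₁ v₂ = u₁ ⬝ᵥ v₁ + u₂ ⬝ᵥ v₂ := fun _ _ _ _ =>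
    sumElim_dotProduct_sumElim _ _ _ _
  have hormp : ∀ i j, wp i ⬝ᵥ wp j = if i = j then (1:ℝ) else 0 := by
    rintro (i | i) (j | j) <;>
      simp only [wp, Sum.elim_inl, Sum.elim_inr, horm, lz_eigen_dot h1, lz_eigen_dot h2,
        dotProduct_zero, zero_dotProduct, add_zero, zero_add] <;>
      simp [Subtype.ext_iff]
  have hormm : ∀ i j, wm i ⬝ᵥ wm j = if i = j then (1:ℝ) else 0 := by
    rintro (i | i) (j | j) <;>
      simp only [wm, Sum.elim_inl, Sum.elim_inr, horm, lz_eigen_dot h1, lz_eigen_dot h2,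
        dotProduct_zero, zero_dotProduct, add_zero, zero_add] <;>
      simp [Subtype.ext_iff]
  have hmv : ∀ (u : m → ℝ) (v : n → ℝ),
      B *ᵥ Sum.elim u v = Sum.elim (M1 *ᵥ u) (M2 *ᵥ v) := by
    intro u v
    rw [hBdef, fromBlocks_mulVec]
    simp
  have heigp : ∀ i, B *ᵥ wp i
      = (Sum.elim (fun i : {i // 0 < h1.eigenvalues i} => h1.eigenvalues i.val)
          (fun j : {j // 0 < h2.eigenvalues j} => h2.eigenvalues j.val)) i • wp i := by
    rintro (i | i) <;>
      simp only [wp, Sum.elim_inl, Sum.elim_inr, hmv, h1.mulVec_eigenvectorBasis,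
        h2.mulVec_eigenvectorBasis, mulVec_zero, lz_elim_smul, smul_zero]
  have heigm : ∀ i, B *ᵥ wm i
      = (Sum.elim (fun i : {i // ¬ 0 < h1.eigenvalues i} => h1.eigenvalues i.val)
          (fun j : {j // ¬ 0 < h2.eigenvalues j} => h2.eigenvalues j.val)) i • wm i := by
    rintro (i | i) <;>
      simp only [wm, Sum.elim_inl, Sum.elim_inr, hmv, h1.mulVec_eigenvectorBasis,
        h2.mulVec_eigenvectorBasis, mulVec_zero, lz_elim_smul, smul_zero]
  have hQp := lz_qf_pos B wp _ hormp heigp (by rintro (i | i) <;> exact i.prop)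
  have hQm := lz_qf_nonpos B wm _ hormm heigm
    (by rintro (i | i) <;> exact le_of_not_gt i.prop)
  have hrankp : Module.finrank ℝ (span ℝ (Set.range wp))
      = (Finset.univ.filter fun i => 0 < h1.eigenvalues i).card
        + (Finset.univ.filter fun i => 0 < h2.eigenvalues i).card := by
    rw [lz_finrank_span wp hormp, Fintype.card_sum, Fintype.card_subtype, Fintype.card_subtype]
  have hrankm : Module.finrank ℝ (span ℝ (Set.range wm))
      = (Finset.univ.filter fun i => ¬ 0 < h1.eigenvalues i).card
        + (Finset.univ.filter fun i => ¬ 0 < h2.eigenvalues i).card := by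
    rw [lz_finrank_span wm hormm, Fintype.card_sum, Fintype.card_subtype, Fintype.card_subtype]
  have hc1 : (Finset.univ.filter fun i => 0 < h1.eigenvalues i).card
      + (Finset.univ.filter fun i => ¬ 0 < h1.eigenvalues i).card = Fintype.card m :=
    Finset.card_filter_add_card_filter_not _
  have hc2 : (Finset.univ.filter fun i => 0 < h2.eigenvalues i).card
      + (Finset.univ.filter fun i => ¬ 0 < h2.eigenvalues i).card = Fintype.card n :=
    Finset.card_filter_add_card_filter_not _
  have hmain := lz_pcard_eq hB (span ℝ (Set.range wp)) (span ℝ (Set.range wm)) hQp hQm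
    (by rw [hrankp, hrankm, Fintype.card_sum]; omega)
  rw [hmain, hrankp]

end Block

lemma lz_pcard_eq_of_eq {M N : Matrix n n ℝ} (h : M = N) (hM : M.IsHermitian)
    (hN : N.IsHermitian) :
    (Finset.univ.filter fun i => 0 < hM.eigenvalues i).card
      = (Finset.univ.filter fun i => 0 < hN.eigenvalues i).card := by
  subst h; rfl

lemma lz_eigen_ne_zero {M : Matrix n n ℝ} (hM : M.IsHermitian) (h : IsUnit M.det) (i : n) :
    hM.eigenvalues i ≠ 0 := by
  intro h0
  have hdet := hM.det_eq_prod_eigenvalues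
  rw [Finset.prod_eq_zero (Finset.mem_univ i) (by rw [h0]; simp)] at hdet
  rw [hdet] at h
  simp at h

lemma lz_matSig {M : Matrix n n ℝ} (hM : M.IsHermitian) (h : IsUnit M.det) :
    matSignature hM
      = 2 * ((Finset.univ.filter fun i => 0 < hM.eigenvalues i).card : ℤ)
        - (Fintype.card n : ℤ) := by
  have hfc : (Finset.univ.filter fun i => hM.eigenvalues i < 0)
      = (Finset.univ.filter fun i => ¬ 0 < hM.eigenvalues i) := by
    apply Finset.filter_congr
    intro i _
    constructor
    · exact fun hi => not_lt.mpr hi.le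
    · exact fun hi => lt_of_le_of_ne (not_lt.mp hi) (lz_eigen_ne_zero hM h i)
  have hcards : (Finset.univ.filter fun i => 0 < hM.eigenvalues i).card
      + (Finset.univ.filter fun i => ¬ 0 < hM.eigenvalues i).card = Fintype.card n :=
    Finset.card_filter_add_card_filter_not _
  rw [matSignature, hfc]
  omega

lemma lz_conjT {a b : Type*} (M : Matrix a b ℝ) : Mᴴ = Mᵀ := by
  ext i j
  simp [conjTranspose_apply]

lemma lz_herm_iff {M : Matrix n n ℝ} : M.IsHermitian ↔ Mᵀ = M := by
  rw [IsHermitian, lz_conjT]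

end LazutkinAux

/-- Lazutkin's lemma: for a symmetric invertible block matrix
    `S = [[A, B], [Bᵀ, C]]` with inverse `S⁻¹ = [[A', B'], [(B')ᵀ, C']]`, if `A`
    and `C'` are invertible then `sgn(S) = sgn(A) + sgn(C')`. -/
theorem lazutkin_signature {m n : Type*} [Fintype m] [Fintype n]
    [DecidableEq m] [DecidableEq n]
    (S : Matrix (m ⊕ n) (m ⊕ n) ℝ) (hS : S.IsHermitian) (hSinv : IsUnit S.det)
    (hA : (S.toBlocks₁₁).IsHermitian) (hAinv : IsUnit (S.toBlocks₁₁).det)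
    (hC' : ((S⁻¹).toBlocks₂₂).IsHermitian) (hC'inv : IsUnit ((S⁻¹).toBlocks₂₂).det) :
    matSignature hS = matSignature hA + matSignature hC' := by
  set A := S.toBlocks₁₁ with hAdef
  set Bm := S.toBlocks₁₂ with hBmdef
  set C := S.toBlocks₂₂ with hCdef
  have hST : Sᵀ = S := lz_herm_iff.mp hS
  have hAT : Aᵀ = A := lz_herm_iff.mp hA
  have hC2 : C.IsHermitian := hS.submatrix Sum.inr
  have hCT : Cᵀ = C := lz_herm_iff.mp hC2
  have h21 : S.toBlocks₂₁ = Bmᵀ := by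
    ext i j
    show S (Sum.inr i) (Sum.inl j) = S (Sum.inl j) (Sum.inr i)
    conv_lhs => rw [← hST]
    rfl
  have hSb : fromBlocks A Bm Bmᵀ C = S := by
    rw [← h21, hAdef, hBmdef, hCdef]
    exact fromBlocks_toBlocks S
  set D := C - Bmᵀ * A⁻¹ * Bm with hDdef
  have hAinvT : A⁻¹ᵀ = A⁻¹ := by rw [transpose_nonsing_inv, hAT]
  have hDT : Dᵀ = D := by
    rw [hDdef, transpose_sub, hCT, transpose_mul, transpose_mul, transpose_transpose,
      hAinvT, Matrix.mul_assoc]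
  have hD : D.IsHermitian := lz_herm_iff.mpr hDT
  set Q := fromBlocks (1 : Matrix m m ℝ) (A⁻¹ * Bm) 0 (1 : Matrix n n ℝ) with hQdef
  set G := fromBlocks A 0 0 D with hGdef
  have hAA : A * (A⁻¹ * Bm) = Bm := by
    rw [← Matrix.mul_assoc, mul_nonsing_inv A hAinv, Matrix.one_mul]
  have hfact : Qᵀ * G * Q = S := by
    rw [hQdef, hGdef, ← hSb, fromBlocks_transpose, fromBlocks_multiply, fromBlocks_multiply]
    rw [transpose_mul, hAinvT, transpose_one, transpose_zero]
    have hBA : Bmᵀ * A⁻¹ * A = Bmᵀ := by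
      rw [Matrix.mul_assoc, nonsing_inv_mul A hAinv, Matrix.mul_one]
    congr 1 <;> simp [hAA, hBA, hDdef, Matrix.mul_assoc] <;> abel
  have hdetQ1 : Q.det = 1 := by
    rw [hQdef, det_fromBlocks_zero₂₁]
    simp
  have hdetQ : IsUnit Q.det := by rw [hdetQ1]; exact isUnit_one
  have hG : G.IsHermitian := by
    rw [lz_herm_iff, hGdef, fromBlocks_transpose, hAT, hDT]
    simp
  have hdetS : S.det = A.det * D.det := by
    rw [← hfact, det_mul, det_mul, det_transpose, hdetQ1, one_mul, mul_one,
      hGdef, det_fromBlocks_zero₂₁]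
  have hdetD : IsUnit D.det := by
    rw [hdetS] at hSinv
    exact isUnit_of_mul_isUnit_right hSinv
  set R := fromBlocks (1 : Matrix m m ℝ) (-(A⁻¹ * Bm)) 0 (1 : Matrix n n ℝ) with hRdef
  have hQR : Q * R = 1 := by
    rw [hQdef, hRdef, fromBlocks_multiply, ← fromBlocks_one]
    congr 1 <;> simp
  have hRQ : R * Q = 1 := by
    rw [hQdef, hRdef, fromBlocks_multiply, ← fromBlocks_one]
    congr 1 <;> simp
  set Fi := fromBlocks A⁻¹ (0 : Matrix m n ℝ) (0 : Matrix n m ℝ) D⁻¹ with hFidef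
  have hGFi : G * Fi = 1 := by
    rw [hGdef, hFidef, fromBlocks_multiply, ← fromBlocks_one]
    congr 1 <;> simp [mul_nonsing_inv A hAinv, mul_nonsing_inv D hdetD]
  have hST1 : S * (R * Fi * Rᵀ) = 1 := by
    rw [← hfact]
    rw [show Qᵀ * G * Q * (R * Fi * Rᵀ) = Qᵀ * (G * ((Q * R) * Fi)) * Rᵀ by
      simp only [Matrix.mul_assoc]]
    rw [hQR, Matrix.one_mul, hGFi, Matrix.mul_one, ← transpose_mul, hRQ, transpose_one]
  have hSinvT : S⁻¹ = R * Fi * Rᵀ := inv_eq_right_inv hST1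
  have hC'D : (S⁻¹).toBlocks₂₂ = D⁻¹ := by
    rw [hSinvT, hRdef, hFidef, fromBlocks_transpose, fromBlocks_multiply, fromBlocks_multiply,
      toBlocks_fromBlocks₂₂]
    simp
  -- positive eigenvalue counts
  have hQGQ : (Qᵀ * G * Q).IsHermitian := by rw [hfact]; exact hS
  have e1 : (Finset.univ.filter fun i => 0 < hG.eigenvalues i).card
      = (Finset.univ.filter fun i => 0 < hS.eigenvalues i).card :=
    (lz_pcard_congr G Q hG hdetQ hQGQ).trans (lz_pcard_eq_of_eq hfact hQGQ hS)
  have hGblock : (fromBlocks A (0 : Matrix m n ℝ) (0 : Matrix n m ℝ) D).IsHermitian := by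
    rw [← hGdef]; exact hG
  have e2 : (Finset.univ.filter fun i => 0 < hGblock.eigenvalues i).card
      = (Finset.univ.filter fun i => 0 < hA.eigenvalues i).card
        + (Finset.univ.filter fun i => 0 < hD.eigenvalues i).card :=
    lz_pcard_blockdiag A D hA hD hGblock
  have e12 : (Finset.univ.filter fun i => 0 < hG.eigenvalues i).card
      = (Finset.univ.filter fun i => 0 < hGblock.eigenvalues i).card :=
    lz_pcard_eq_of_eq hGdef hG hGblock
  -- D⁻¹ is congruent to D
  have hDinvT : (D⁻¹)ᵀ = D⁻¹ := by rw [transpose_nonsing_inv, hDT]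
  have hDinvHerm : (D⁻¹).IsHermitian := lz_herm_iff.mpr hDinvT
  have hDfact : (D⁻¹)ᵀ * D * D⁻¹ = D⁻¹ := by
    rw [hDinvT, Matrix.mul_assoc, mul_nonsing_inv D hdetD, Matrix.mul_one]
  have hDQD : ((D⁻¹)ᵀ * D * D⁻¹).IsHermitian := by rw [hDfact]; exact hDinvHerm
  have hdetDinv : IsUnit (D⁻¹).det := by
    rw [det_nonsing_inv, isUnit_ringInverse]
    exact hdetD
  have e3 : (Finset.univ.filter fun i => 0 < hD.eigenvalues i).card
      = (Finset.univ.filter fun i => 0 < hC'.eigenvalues i).card :=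
    (lz_pcard_congr D D⁻¹ hD hdetDinv hDQD).trans
      ((lz_pcard_eq_of_eq hDfact hDQD hDinvHerm).trans
        (lz_pcard_eq_of_eq hC'D.symm hDinvHerm hC'))
  -- final arithmetic
  rw [lz_matSig hS hSinv, lz_matSig hA hAinv, lz_matSig hC' hC'inv]
  have hcard : Fintype.card (m ⊕ n) = Fintype.card m + Fintype.card n := Fintype.card_sum
  have hle1 : (Finset.univ.filter fun i => 0 < hA.eigenvalues i).card ≤ Fintype.card m :=
    le_trans (Finset.card_filter_le _ _) (le_of_eq (Finset.card_univ))
  have hle2 : (Finset.univ.filter fun i => 0 < hC'.eigenvalues i).card ≤ Fintype.card n :=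
    le_trans (Finset.card_filter_le _ _) (le_of_eq (Finset.card_univ))
  rw [← e1, e12, e2, e3]
  push_cast
  rw [hcard]
  push_cast
  ring
end

section
/- For y < -√2 and 0 ≤ s < m(y) = −y − √(y²−2), the Fenchel–Legendre transform Λ*(s) = sup_t [st − Λ(t)] of Λ(t) = m(y)t − (1/2)∫log(1 + 2t/(x−y)) σ_sc(dx) is achieved at τ_s = (s² + 2s√(y²−2)) / (4(m(y) − s)), and equals Λ*(s) = −s²/8 − s/(2m(y)) − (1/2)log(1 − s/m(y)). -/
open MeasureTheory Real Set

lemma stieltjes (z : ℝ) (hz : z < -Real.sqrt 2) :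
    ∫ x in (-Real.sqrt 2)..(Real.sqrt 2), Real.sqrt (2 - x ^ 2) / (x - z)
      = π * (-z - Real.sqrt (z ^ 2 - 2)) := by
  have h2 : (0:ℝ) < Real.sqrt 2 := by positivity
  have hr2 : Real.sqrt 2 ^ 2 = 2 := Real.sq_sqrt (by norm_num)
  have hss : Real.sqrt 2 * Real.sqrt 2 = 2 := Real.mul_self_sqrt (by norm_num)
  have hz2 : 2 < z ^ 2 := by nlinarith
  set D := Real.sqrt (z ^ 2 - 2) with hD
  have hDpos : 0 < D := Real.sqrt_pos.2 (by linarith)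
  have hD2 : D ^ 2 = z ^ 2 - 2 := Real.sq_sqrt (by linarith)
  set F : ℝ → ℝ := fun x => Real.sqrt (2 - x ^ 2) - z * Real.arcsin (x / Real.sqrt 2)
      - D * Real.arcsin ((2 - z * x) / (Real.sqrt 2 * (x - z))) with hF
  have key : ∀ x ∈ Ioo (-Real.sqrt 2) (Real.sqrt 2),
      HasDerivAt F (Real.sqrt (2 - x ^ 2) / (x - z)) x := by
    intro x hx
    obtain ⟨hx1, hx2⟩ := hx
    have hxz' : 0 < x - z := by linarith
    have hx2' : x ^ 2 < 2 := by nlinarith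
    set Sx := Real.sqrt (2 - x ^ 2) with hSx
    have hSpos : 0 < Sx := Real.sqrt_pos.2 (by linarith)
    have hS2 : Sx ^ 2 = 2 - x ^ 2 := Real.sq_sqrt (by linarith)
    have d1 : HasDerivAt (fun x : ℝ => Real.sqrt (2 - x ^ 2)) (-x / Sx) x := by
      have h := (Real.hasDerivAt_sqrt (by nlinarith : (2 - x ^ 2) ≠ 0)).comp x
        (((hasDerivAt_id x).pow 2).const_sub 2)
      refine h.congr_deriv (Eq.symm ?_)
      field_simp
      simp only [id_eq, ← hSx]; field_simp [hSpos.ne']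
      rw [show (2:ℕ) - 1 = 1 from rfl, pow_one]; push_cast; ring
    have d2 : HasDerivAt (fun x : ℝ => Real.arcsin (x / Real.sqrt 2)) (1 / Sx) x := by
      have hne1 : x / Real.sqrt 2 ≠ -1 := by
        intro h; rw [div_eq_iff (ne_of_gt h2)] at h; linarith
      have hne2 : x / Real.sqrt 2 ≠ 1 := by
        intro h; rw [div_eq_iff (ne_of_gt h2)] at h; linarith
      have h := (Real.hasDerivAt_arcsin hne1 hne2).comp x
        ((hasDerivAt_id x).div_const (Real.sqrt 2))
      have hu : Real.sqrt (1 - (x / Real.sqrt 2) ^ 2) = Sx / Real.sqrt 2 := by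
        rw [show 1 - (x / Real.sqrt 2) ^ 2 = (2 - x ^ 2) / 2 by field_simp; rw [hr2]; ring,
          Real.sqrt_div (by linarith) 2]
      refine h.congr_deriv (Eq.symm ?_)
      rw [hu]
      field_simp
    have d3 : HasDerivAt (fun x : ℝ => Real.arcsin ((2 - z * x) / (Real.sqrt 2 * (x - z))))
        (D / ((x - z) * Sx)) x := by
      set u := (2 - z * x) / (Real.sqrt 2 * (x - z)) with hu
      have hden : Real.sqrt 2 * (x - z) ≠ 0 := by positivity
      have husq : 1 - u ^ 2 = D ^ 2 * Sx ^ 2 / (2 * (x - z) ^ 2) := by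
        rw [hu, hD2, hS2, div_pow, mul_pow, hr2]
        field_simp
        ring
      have husq_pos : 0 < 1 - u ^ 2 := by rw [husq]; positivity
      have hne1 : u ≠ -1 := by intro h; rw [h] at husq_pos; norm_num at husq_pos
      have hne2 : u ≠ 1 := by intro h; rw [h] at husq_pos; norm_num at husq_pos
      have hdu := (((hasDerivAt_id x).const_mul z).const_sub 2).div
          (((hasDerivAt_id x).sub_const z).const_mul (Real.sqrt 2)) hden
      have h := (Real.hasDerivAt_arcsin hne1 hne2).comp x hdu
      have hsq : Real.sqrt (1 - u ^ 2) = D * Sx / (Real.sqrt 2 * (x - z)) := by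
        rw [husq]
        rw [show D ^ 2 * Sx ^ 2 / (2 * (x - z) ^ 2) = (D * Sx / (Real.sqrt 2 * (x - z))) ^ 2 by
          rw [div_pow, mul_pow, mul_pow, hr2]; try ring]
        exact Real.sqrt_sq (by positivity)
      refine h.congr_deriv (Eq.symm ?_)
      rw [hsq, mul_pow, hr2]
      simp only [id_eq, mul_one]
      rw [show -z * (Real.sqrt 2 * (x - z)) - (2 - z * x) * Real.sqrt 2
          = Real.sqrt 2 * (z ^ 2 - 2) by ring, ← hD2]
      field_simp
      ring_nf
      rw [hr2]
    have hd := (d1.sub (d2.const_mul z)).sub (d3.const_mul D)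
    refine hd.congr_deriv (Eq.symm ?_)
    field_simp
    linear_combination hS2 + hD2
  have hle : -Real.sqrt 2 ≤ Real.sqrt 2 := by linarith
  have hdenne : ∀ x ∈ Icc (-Real.sqrt 2) (Real.sqrt 2), Real.sqrt 2 * (x - z) ≠ 0 := by
    intro x hx
    have : 0 < x - z := by have := hx.1; linarith
    positivity
  have hcont : ContinuousOn F (Icc (-Real.sqrt 2) (Real.sqrt 2)) := by
    apply ContinuousOn.sub
    apply ContinuousOn.sub
    · exact (Real.continuous_sqrt.comp (by continuity)).continuousOn
    · exact (continuous_const.mul (Real.continuous_arcsin.comp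
        (continuous_id.div_const _))).continuousOn
    · apply ContinuousOn.mul continuousOn_const
      apply Real.continuous_arcsin.comp_continuousOn
      exact ContinuousOn.div (by fun_prop) (by fun_prop) hdenne
  have hintg : ContinuousOn (fun x : ℝ => Real.sqrt (2 - x ^ 2) / (x - z))
      (Icc (-Real.sqrt 2) (Real.sqrt 2)) := by
    apply ContinuousOn.div (by fun_prop) (by fun_prop)
    intro x hx
    have := hx.1
    intro h
    have : x = z := by linarith [sub_eq_zero.1 h]
    linarith [hx.1]
  have hFTC := intervalIntegral.integral_eq_sub_of_hasDeriv_right_of_le hle hcont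
    (fun x hx => (key x hx).hasDerivWithinAt)
    ((hintg.mono (by rw [uIcc_of_le hle])).intervalIntegrable)
  rw [hFTC]
  have e1 : (2 - z * Real.sqrt 2) / (Real.sqrt 2 * (Real.sqrt 2 - z)) = 1 := by
    rw [div_eq_one_iff_eq (hdenne _ (by constructor <;> linarith))]
    ring_nf
    linarith [hss]
  have e2 : (2 - z * -Real.sqrt 2) / (Real.sqrt 2 * (-Real.sqrt 2 - z)) = -1 := by
    have hne := hdenne _ (⟨le_refl _, by linarith⟩ : -Real.sqrt 2 ∈ Icc (-Real.sqrt 2) (Real.sqrt 2))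
    rw [div_eq_iff hne]
    ring_nf
    linarith [hss]
  have hz0 : (2:ℝ) - Real.sqrt 2 ^ 2 = 0 := by rw [hr2]; ring
  have hzneg : (2:ℝ) - (-Real.sqrt 2) ^ 2 = 0 := by rw [neg_pow, hr2]; ring
  rw [hF]
  simp only [e1, e2, hz0, hzneg, Real.sqrt_zero, Real.arcsin_one, Real.arcsin_neg_one,
    neg_div, Real.arcsin_neg, div_self (ne_of_gt h2)]
  ring

lemma hasDerivAt_P (v : ℝ) (hv : v < -Real.sqrt 2) :
    HasDerivAt (fun v : ℝ => v * Real.sqrt (v ^ 2 - 2) / 2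
        - Real.log (-v - Real.sqrt (v ^ 2 - 2)))
      (Real.sqrt (v ^ 2 - 2)) v := by
  have h2 : (0:ℝ) < Real.sqrt 2 := by positivity
  have hr2 : Real.sqrt 2 ^ 2 = 2 := Real.sq_sqrt (by norm_num)
  have hv2 : 2 < v ^ 2 := by nlinarith
  set R := Real.sqrt (v ^ 2 - 2) with hR
  have hRpos : 0 < R := Real.sqrt_pos.2 (by linarith)
  have hR2 : R ^ 2 = v ^ 2 - 2 := Real.sq_sqrt (by linarith)
  have hRv : R < -v := by
    nlinarith [Real.sq_sqrt (by linarith : (0:ℝ) ≤ v ^ 2 - 2), Real.sqrt_nonneg (v ^ 2 - 2)]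
  have hpos : 0 < -v - R := by linarith
  have dR : HasDerivAt (fun v : ℝ => Real.sqrt (v ^ 2 - 2)) (v / R) v := by
    have h := (Real.hasDerivAt_sqrt (by nlinarith : (v ^ 2 - 2) ≠ 0)).comp v
      (((hasDerivAt_id v).pow 2).sub_const 2)
    refine h.congr_deriv (Eq.symm ?_)
    field_simp
    rw [← hR, show (2:ℕ) - 1 = 1 from rfl, pow_one]; simp only [id_eq, Nat.cast_ofNat]; field_simp [hRpos.ne']
  have d1 : HasDerivAt (fun v : ℝ => v * Real.sqrt (v ^ 2 - 2) / 2)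
      ((1 * R + v * (v / R)) / 2) v := ((hasDerivAt_id v).mul dR).div_const 2
  have dinner : HasDerivAt (fun v : ℝ => -v - Real.sqrt (v ^ 2 - 2)) (-1 - v / R) v := by
    exact ((hasDerivAt_id' v).neg.sub dR)
  have d2 := (Real.hasDerivAt_log (ne_of_gt hpos)).comp v dinner
  have := d1.sub d2
  refine this.congr_deriv (Eq.symm ?_)
  field_simp
  ring_nf
  linear_combination (-R - v) * hR2

lemma hasDerivAt_g (y t₀ : ℝ) (hy : y < -Real.sqrt 2) (ht : (Real.sqrt 2 + y) / 2 < t₀) :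
    HasDerivAt (fun t => ∫ x in (-Real.sqrt 2)..(Real.sqrt 2),
        Real.log (1 + 2 * t / (x - y)) * ((1 / π) * Real.sqrt (2 - x ^ 2)))
      (2 * (2 * t₀ - y) - 2 * Real.sqrt ((y - 2 * t₀) ^ 2 - 2)) t₀ := by
  have h2 : (0:ℝ) < Real.sqrt 2 := by positivity
  have hπ : (0:ℝ) < π := Real.pi_pos
  set ε := (t₀ - (Real.sqrt 2 + y) / 2) / 2 with hε
  have hεpos : 0 < ε := by simp only [hε]; linarith
  have hlow : ∀ t ∈ Metric.ball t₀ ε, ∀ x ∈ Set.Ioc (-Real.sqrt 2) (Real.sqrt 2),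
      2 * ε < x - y + 2 * t := by
    intro t htb x hx
    rw [Metric.mem_ball, Real.dist_eq, abs_lt] at htb
    have := hx.1
    simp only [hε] at *
    linarith
  have hmeasg : ∀ t : ℝ, AEStronglyMeasurable
      (fun x => Real.log (1 + 2 * t / (x - y)) * ((1 / π) * Real.sqrt (2 - x ^ 2)))
      (volume.restrict (Set.uIoc (-Real.sqrt 2) (Real.sqrt 2))) := by
    intro t
    apply Measurable.aestronglyMeasurable
    apply Measurable.mul
    · exact Real.measurable_log.comp (by fun_prop)
    · fun_prop
  have key := intervalIntegral.hasDerivAt_integral_of_dominated_loc_of_deriv_le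
    (F := fun t x => Real.log (1 + 2 * t / (x - y)) * ((1 / π) * Real.sqrt (2 - x ^ 2)))
    (F' := fun t x => 2 / (x - y + 2 * t) * ((1 / π) * Real.sqrt (2 - x ^ 2)))
    (x₀ := t₀) (a := -Real.sqrt 2) (b := Real.sqrt 2) (μ := volume)
    (bound := fun _ => 2 / (2 * ε) * ((1 / π) * Real.sqrt 2))
    (Metric.ball_mem_nhds t₀ hεpos)
    (Filter.Eventually.of_forall fun t => hmeasg t)
    (by -- IntervalIntegrable (F t₀)
      apply ContinuousOn.intervalIntegrable
      rw [uIcc_of_le (by linarith)]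
      apply ContinuousOn.mul
      · apply ContinuousOn.log
        · apply ContinuousOn.add continuousOn_const
          apply ContinuousOn.div continuousOn_const (by fun_prop)
          intro x hx
          have := hx.1
          intro h
          have : x = y := by linarith [sub_eq_zero.1 h]
          linarith
        · intro x hx
          have hxy : 0 < x - y := by have := hx.1; linarith
          have : 1 + 2 * t₀ / (x - y) = (x - y + 2 * t₀) / (x - y) := by field_simp
          rw [this]
          have hnum : 0 < x - y + 2 * t₀ := by have := hx.1; linarith
          positivity
      · fun_prop)
    (by -- measurability of F' t₀
      apply Measurable.aestronglyMeasurable; fun_prop)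
    (by -- bound
      apply Filter.Eventually.of_forall
      intro x hx t htb
      rw [uIoc_of_le (by linarith)] at hx
      have hlb := hlow t htb x hx
      have hpos : 0 < x - y + 2 * t := by linarith
      rw [norm_mul, norm_div]
      have h1 : ‖(2:ℝ)‖ = 2 := by norm_num
      have h2' : ‖x - y + 2 * t‖ = x - y + 2 * t := abs_of_pos hpos
      have h3 : ‖(1 / π) * Real.sqrt (2 - x ^ 2)‖ = (1 / π) * Real.sqrt (2 - x ^ 2) := by
        apply abs_of_nonneg; positivity
      rw [h1, h2', h3]
      apply mul_le_mul
      · apply div_le_div_of_nonneg_left (by norm_num) (by linarith) (le_of_lt hlb)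
      · apply mul_le_mul_of_nonneg_left _ (by positivity)
        apply Real.sqrt_le_sqrt
        nlinarith [sq_nonneg x]
      · positivity
      · positivity)
    intervalIntegrable_const
    (by -- differentiability
      apply Filter.Eventually.of_forall
      intro x hx t htb
      rw [uIoc_of_le (by linarith)] at hx
      have hxy : 0 < x - y := by have := hx.1; linarith
      have hlb := hlow t htb x hx
      have hpos : 0 < x - y + 2 * t := by linarith
      have harg : 1 + 2 * t / (x - y) = (x - y + 2 * t) / (x - y) := by field_simp
      have hargpos : 0 < 1 + 2 * t / (x - y) := by rw [harg]; positivity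
      have hinner : HasDerivAt (fun t : ℝ => 1 + 2 * t / (x - y)) (2 / (x - y)) t := by
        simpa using (((hasDerivAt_id t).const_mul 2).div_const (x - y)).const_add 1
      have hlog := (Real.hasDerivAt_log (ne_of_gt hargpos)).comp t hinner
      have := hlog.mul_const ((1 / π) * Real.sqrt (2 - x ^ 2))
      refine this.congr_deriv (Eq.symm ?_)
      rw [harg]
      field_simp)
  have hderiv := key.2
  refine hderiv.congr_deriv (Eq.symm ?_)
  have hcongr : ∀ x ∈ Set.uIcc (-Real.sqrt 2) (Real.sqrt 2),
      2 / (x - y + 2 * t₀) * ((1 / π) * Real.sqrt (2 - x ^ 2))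
      = (2 / π) * (Real.sqrt (2 - x ^ 2) / (x - (y - 2 * t₀))) := by
    intro x hx
    rw [uIcc_of_le (by linarith)] at hx
    have hxy : 0 < x - y + 2 * t₀ := by have := hx.1; linarith
    rw [show x - (y - 2 * t₀) = x - y + 2 * t₀ by ring]
    rw [div_mul_eq_mul_div, div_mul_eq_mul_div, mul_div_assoc]
    rw [one_mul, div_div]
    field_simp
  rw [intervalIntegral.integral_congr hcongr, intervalIntegral.integral_const_mul,
    stieltjes (y - 2 * t₀) (by linarith)]
  have hsq : ((y - 2*t₀) ^ 2 : ℝ) = (y - 2*t₀)^2 := rfl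
  field_simp
  ring

lemma sqrt_gap (a₁ a₂ : ℝ) (h1 : Real.sqrt 2 < a₁) (h12 : a₁ ≤ a₂) :
    a₂ - a₁ ≤ Real.sqrt (a₂ ^ 2 - 2) - Real.sqrt (a₁ ^ 2 - 2) := by
  have h2 : (0:ℝ) < Real.sqrt 2 := by positivity
  have hr2 : Real.sqrt 2 ^ 2 = 2 := Real.sq_sqrt (by norm_num)
  have ha1 : 2 < a₁ ^ 2 := by nlinarith
  have ha2 : 2 < a₂ ^ 2 := by nlinarith
  set R₁ := Real.sqrt (a₁ ^ 2 - 2) with hR1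
  set R₂ := Real.sqrt (a₂ ^ 2 - 2) with hR2
  have hR1pos : 0 < R₁ := Real.sqrt_pos.2 (by linarith)
  have hR2pos : 0 < R₂ := Real.sqrt_pos.2 (by linarith)
  have hR1sq : R₁ ^ 2 = a₁ ^ 2 - 2 := Real.sq_sqrt (by linarith)
  have hR2sq : R₂ ^ 2 = a₂ ^ 2 - 2 := Real.sq_sqrt (by linarith)
  have hR1le : R₁ ≤ a₁ := by nlinarith
  have hR2le : R₂ ≤ a₂ := by nlinarith
  nlinarith [mul_pos hR1pos hR2pos]


/-- For `y < -√2` and `0 ≤ s < m(y) = −y − √(y²−2)`, the Fenchel–Legendre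
    transform `Λ*(s) = sup_t [s t − Λ(t)]` of
    `Λ(t) = m(y) t − (1/2) ∫ log(1 + 2t/(x−y)) σ_sc(dx)` (with `Λ = +∞` for
    `t < (√2+y)/2`) is achieved at `τ_s = (s² + 2 s √(y²−2)) / (4(m(y) − s))`
    and equals `−s²/8 − s/(2 m(y)) − (1/2) log(1 − s/m(y))`. -/
theorem Lambda_legendre_transform (y s : ℝ) (hy : y < -Real.sqrt 2)
    (m : ℝ) (hm : m = -y - Real.sqrt (y ^ 2 - 2))
    (hs0 : 0 ≤ s) (hsm : s < m)
    (Λ : ℝ → ℝ)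
    (hΛ : Λ = fun t => m * t - (1 / 2) *
      ∫ x in Set.Icc (-Real.sqrt 2) (Real.sqrt 2),
        Real.log (1 + 2 * t / (x - y)) * ((1 / π) * Real.sqrt (2 - x ^ 2)))
    (τ : ℝ) (hτ : τ = (s ^ 2 + 2 * s * Real.sqrt (y ^ 2 - 2)) / (4 * (m - s))) :
    (Real.sqrt 2 + y) / 2 < τ
    ∧ (∀ t : ℝ, (Real.sqrt 2 + y) / 2 < t → s * t - Λ t ≤ s * τ - Λ τ)
    ∧ s * τ - Λ τ = -s ^ 2 / 8 - s / (2 * m) - (1 / 2) * Real.log (1 - s / m) := by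
  have h2 : (0:ℝ) < Real.sqrt 2 := by positivity
  have hr2 : Real.sqrt 2 ^ 2 = 2 := Real.sq_sqrt (by norm_num)
  have hy2 : 2 < y ^ 2 := by nlinarith
  set d := Real.sqrt (y ^ 2 - 2) with hd
  have hdpos : 0 < d := Real.sqrt_pos.2 (by linarith)
  have hd2 : d ^ 2 = y ^ 2 - 2 := Real.sq_sqrt (by linarith)
  have hdy : d < -y := by nlinarith
  have hmpos : 0 < m := by rw [hm]; linarith
  have hms : 0 < m - s := by linarith
  have hτ4 : 4 * (m - s) * τ = s ^ 2 + 2 * s * d := by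
    rw [hτ]; field_simp
  have hτ0 : 0 ≤ τ := by
    rw [hτ]
    apply div_nonneg _ (by linarith)
    nlinarith
  have hlb : (Real.sqrt 2 + y) / 2 < 0 := by linarith
  have hlbτ : (Real.sqrt 2 + y) / 2 < τ := lt_of_lt_of_le hlb hτ0
  -- the interval-integral version of the integral
  set gI : ℝ → ℝ := fun t => ∫ x in (-Real.sqrt 2)..(Real.sqrt 2),
      Real.log (1 + 2 * t / (x - y)) * ((1 / π) * Real.sqrt (2 - x ^ 2)) with hgI
  clear_value gI
  have hicc : ∀ t : ℝ, (∫ x in Set.Icc (-Real.sqrt 2) (Real.sqrt 2),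
      Real.log (1 + 2 * t / (x - y)) * ((1 / π) * Real.sqrt (2 - x ^ 2))) = gI t := by
    intro t
    rw [hgI]
    rw [MeasureTheory.integral_Icc_eq_integral_Ioc,
      ← intervalIntegral.integral_of_le (by linarith : -Real.sqrt 2 ≤ Real.sqrt 2)]
  have hΛ' : ∀ t : ℝ, s * t - Λ t = (s - m) * t + gI t / 2 := by
    intro t
    rw [hΛ]
    simp only
    rw [hicc t]
    ring
  -- derivative of the objective
  set ψ : ℝ → ℝ := fun t => s - m + 2 * t - y - Real.sqrt ((y - 2 * t) ^ 2 - 2) with hψ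
  clear_value ψ
  have hFder : ∀ t : ℝ, (Real.sqrt 2 + y) / 2 < t →
      HasDerivAt (fun t => (s - m) * t + gI t / 2) (ψ t) t := by
    intro t ht
    have hg := hasDerivAt_g y t hy ht
    rw [← hgI] at hg
    have := ((hasDerivAt_id t).const_mul (s - m)).add (hg.div_const 2)
    refine this.congr_deriv (Eq.symm ?_)
    rw [hψ]
    ring
  have hψcont : Continuous ψ := by
    rw [hψ]; fun_prop
  -- ψ τ = 0
  have hA : Real.sqrt ((y - 2 * τ) ^ 2 - 2) = s + d + 2 * τ := by
    rw [show (y - 2 * τ) ^ 2 - 2 = (s + d + 2 * τ) ^ 2 by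
      rw [hm] at hτ4; linear_combination hτ4 - hd2]
    exact Real.sqrt_sq (by positivity)
  have hψτ : ψ τ = 0 := by
    rw [hψ]; simp only; rw [hA, hm]; ring
  -- antitonicity of ψ on the domain
  have hanti : ∀ t₁ t₂ : ℝ, (Real.sqrt 2 + y) / 2 < t₁ → t₁ ≤ t₂ → ψ t₂ ≤ ψ t₁ := by
    intro t₁ t₂ h1 h12
    rw [hψ]
    simp only
    have ha1 : Real.sqrt 2 < 2 * t₁ - y := by linarith
    have e1 : (y - 2 * t₁) ^ 2 = (2 * t₁ - y) ^ 2 := by ring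
    have e2 : (y - 2 * t₂) ^ 2 = (2 * t₂ - y) ^ 2 := by ring
    rw [e1, e2]
    have := sqrt_gap (2 * t₁ - y) (2 * t₂ - y) ha1 (by linarith)
    linarith
  -- part 2
  have part2 : ∀ t : ℝ, (Real.sqrt 2 + y) / 2 < t → s * t - Λ t ≤ s * τ - Λ τ := by
    intro t ht
    rw [hΛ' t, hΛ' τ]
    rcases le_total t τ with hc | hc
    · have hFTC : ∫ u in t..τ, ψ u =
          ((s - m) * τ + gI τ / 2) - ((s - m) * t + gI t / 2) := by
        apply intervalIntegral.integral_eq_sub_of_hasDerivAt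
        · intro u hu
          rw [uIcc_of_le hc] at hu
          exact hFder u (lt_of_lt_of_le ht hu.1)
        · exact hψcont.intervalIntegrable _ _
      have hnn : 0 ≤ ∫ u in t..τ, ψ u := by
        apply intervalIntegral.integral_nonneg hc
        intro u hu
        have := hanti u τ (lt_of_lt_of_le ht hu.1) hu.2
        linarith [hψτ ▸ this]
      linarith [hFTC ▸ hnn]
    · have hFTC : ∫ u in τ..t, ψ u =
          ((s - m) * t + gI t / 2) - ((s - m) * τ + gI τ / 2) := by
        apply intervalIntegral.integral_eq_sub_of_hasDerivAt
        · intro u hu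
          rw [uIcc_of_le hc] at hu
          exact hFder u (lt_of_lt_of_le hlbτ hu.1)
        · exact hψcont.intervalIntegrable _ _
      have hnn2 : 0 ≤ ∫ u in τ..t, -ψ u := by
        apply intervalIntegral.integral_nonneg hc
        intro u hu
        have := hanti τ u hlbτ hu.1
        linarith [hψτ ▸ this]
      rw [intervalIntegral.integral_neg] at hnn2
      linarith [hFTC ▸ hnn2]
  -- g = G on the domain
  set P : ℝ → ℝ := fun v => v * Real.sqrt (v ^ 2 - 2) / 2
      - Real.log (-v - Real.sqrt (v ^ 2 - 2)) with hP
  clear_value P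
  have hgG : gI τ = 2 * τ ^ 2 - 2 * y * τ + P (y - 2 * τ) - P y := by
    have hφcont : Continuous (fun u : ℝ =>
        2 * (2 * u - y) - 2 * Real.sqrt ((y - 2 * u) ^ 2 - 2)) := by fun_prop
    have hin : ∀ u ∈ Set.uIcc (0:ℝ) τ, (Real.sqrt 2 + y) / 2 < u := by
      intro u hu
      rw [uIcc_of_le hτ0] at hu
      linarith [hu.1]
    have h1 : ∫ u in (0:ℝ)..τ, (2 * (2 * u - y) - 2 * Real.sqrt ((y - 2 * u) ^ 2 - 2))
        = gI τ - gI 0 := by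
      apply intervalIntegral.integral_eq_sub_of_hasDerivAt
      · intro u hu
        have h := hasDerivAt_g y u hy (hin u hu)
        rw [← hgI] at h
        exact h
      · exact hφcont.intervalIntegrable _ _
    have h2' : ∫ u in (0:ℝ)..τ, (2 * (2 * u - y) - 2 * Real.sqrt ((y - 2 * u) ^ 2 - 2))
        = (2 * τ ^ 2 - 2 * y * τ + P (y - 2 * τ)) - (2 * 0 ^ 2 - 2 * y * 0 + P (y - 2 * 0)) := by
      apply intervalIntegral.integral_eq_sub_of_hasDerivAt
      · intro u hu
        have hu' := hin u hu
        have hyu : y - 2 * u < -Real.sqrt 2 := by linarith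
        have hPd := hasDerivAt_P (y - 2 * u) hyu
        have hchain := hPd.comp u (((hasDerivAt_id u).const_mul 2).const_sub y)
        have hpoly : HasDerivAt (fun u : ℝ => 2 * u ^ 2 - 2 * y * u)
            (2 * (2 * u) - 2 * y) u := by
          exact ((((hasDerivAt_id' u).pow 2).const_mul 2).sub
            (((hasDerivAt_id' u).const_mul (2 * y)))).congr_deriv (by norm_num)
        have := hpoly.add hchain
        convert this using 1
        · ext w; rw [hP]; simp [Function.comp]
        · ring
      · exact hφcont.intervalIntegrable _ _
    have hg0 : gI 0 = 0 := by
      rw [hgI]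
      simp
    rw [h2', hg0] at h1
    have : P (y - 2 * 0) = P y := by norm_num
    rw [this] at h1
    linarith
  -- part 3
  have part3 : s * τ - Λ τ = -s ^ 2 / 8 - s / (2 * m) - (1 / 2) * Real.log (1 - s / m) := by
    rw [hΛ' τ, hgG]
    have hPy : P y = y * d / 2 - Real.log m := by
      simp only [hP, hm, hd]
    have hPyτ : P (y - 2 * τ) = (y - 2 * τ) * (s + d + 2 * τ) / 2 - Real.log (m - s) := by
      simp only [hP]
      rw [hA]
      rw [show -(y - 2 * τ) - (s + d + 2 * τ) = m - s by rw [hm]; ring]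
    rw [hPy, hPyτ]
    have hlog : Real.log (1 - s / m) = Real.log (m - s) - Real.log m := by
      rw [show 1 - s / m = (m - s) / m by field_simp]
      exact Real.log_div (by linarith) (by linarith)
    rw [hlog]
    have halg : (s - m) * τ + (2 * τ ^ 2 - 2 * y * τ + ((y - 2 * τ) * (s + d + 2 * τ) / 2)
        - y * d / 2) / 2 = -s ^ 2 / 8 - s / (2 * m) := by
      rw [hm] at hτ4 ⊢
      have hne : -y - d ≠ 0 := by linarith
      field_simp
      linear_combination (4*y + 4*d) * hτ4 + 8 * s * hd2
    ring_nf
    ring_nf at halg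
    linarith [halg]
  exact ⟨hlbτ, part2, part3⟩
end
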